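/- Let p be a prime and ω = exp(2πi/p). Then every square submatrix of the p×p Fourier matrix F_p = (ω^{jm})_{j,m=0,...,p-1} has nonzero determinant. -/

import Mathlib

open Complex Polynomial Finset

section ChebotarevAux

variable {p : ℕ} {ω : ℂ}

lemma fp_lemma {F : Type*} [Field F] {k : ℕ} (e : Fin k → ℕ)
    (he : Function.Injective fun j => ((e j : ℕ) : F))
    (a : Fin k → F) (Q : F[X])
    (hdvd : (∑ j, C (a j) * X ^ (e j)) = (X - 1) ^ k * Q) :
    ∀ j, a j = 0 := by
  classical
  set T : F[X] → F[X] := fun f => X * derivative f with hTdef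
  have hT1 : ∀ (b : F) (n : ℕ), T (C b * X ^ n) = C (b * n) * X ^ n := by
    intro b n
    cases n with
    | zero => simp [hTdef]
    | succ s =>
      simp only [hTdef, derivative_C_mul, derivative_X_pow, map_mul]
      push_cast
      ring
  have hTsum : ∀ (b : Fin k → F), T (∑ j, C (b j) * X ^ (e j))
      = ∑ j, C (b j * (e j : F)) * X ^ (e j) := by
    intro b
    simp only [hTdef, derivative_sum, Finset.mul_sum]
    exact Finset.sum_congr rfl fun j _ => hT1 (b j) (e j)
  have iter1 : ∀ m : ℕ, T^[m] (∑ j, C (a j) * X ^ (e j))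
      = ∑ j, C (a j * (e j : F) ^ m) * X ^ (e j) := by
    intro m
    induction m with
    | zero => simp
    | succ m ih =>
      rw [Function.iterate_succ_apply', ih, hTsum]
      exact Finset.sum_congr rfl fun j _ => by ring_nf
  have hTfac : ∀ (t : ℕ) (g : F[X]), 0 < t → ∃ g', T ((X - 1) ^ t * g) = (X - 1) ^ (t - 1) * g' := by
    intro t g ht
    refine ⟨X * (C (t : F) * g + (X - 1) * derivative g), ?_⟩
    have : derivative ((X - 1) ^ t * g)
        = C (t:F) * (X-1)^(t-1) * g + (X-1)^t * derivative g := by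
      rw [derivative_mul, derivative_pow]
      simp
    rw [hTdef]
    simp only []
    rw [this]
    have hpow : (X - 1 : F[X]) ^ t = (X-1)^(t-1) * (X-1) := by
      rw [← pow_succ]; congr 1; omega
    rw [hpow]; ring
  have iter2 : ∀ m : ℕ, m ≤ k → ∃ g, T^[m] ((X - 1) ^ k * Q) = (X - 1) ^ (k - m) * g := by
    intro m
    induction m with
    | zero => exact fun _ => ⟨Q, by simp⟩
    | succ m ih =>
      intro hm
      obtain ⟨g, hg⟩ := ih (le_of_lt (Nat.lt_of_succ_le hm))
      obtain ⟨g', hg'⟩ := hTfac (k - m) g (by omega)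
      refine ⟨g', ?_⟩
      rw [Function.iterate_succ_apply', hg, hg']
      have : k - m - 1 = k - (m+1) := by omega
      rw [this]
  have key : ∀ m : ℕ, m < k → ∑ j, a j * (e j : F) ^ m = 0 := by
    intro m hm
    obtain ⟨g, hg⟩ := iter2 m (le_of_lt hm)
    have heq : ∑ j, C (a j * (e j : F) ^ m) * X ^ (e j) = (X - 1) ^ (k - m) * g := by
      rw [← iter1, hdvd, hg]
    have := congrArg (Polynomial.eval 1) heq
    simp only [eval_mul, eval_pow, eval_sub, eval_X, eval_one, sub_self, eval_finset_sum,
      eval_C, one_pow, mul_one] at this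
    rw [this, zero_pow (by omega : k - m ≠ 0), zero_mul]
  -- Vandermonde step
  have hvm : Matrix.vecMul a (Matrix.vandermonde (fun j => ((e j : ℕ) : F))) = 0 := by
    funext m
    simp only [Matrix.vecMul, dotProduct, Matrix.vandermonde, Matrix.of_apply,
      Pi.zero_apply]
    exact key m m.isLt
  have hdet : (Matrix.vandermonde (fun j => ((e j : ℕ) : F))).det ≠ 0 := by
    rw [Matrix.det_vandermonde]
    refine Finset.prod_ne_zero_iff.2 fun i _ => Finset.prod_ne_zero_iff.2 fun j hj => ?_
    have : i ≠ j := fun h => by subst h; exact absurd (Finset.mem_Ioi.1 hj) (lt_irrefl _)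
    exact sub_ne_zero_of_ne fun h => this (he h.symm)
  have := Matrix.eq_zero_of_vecMul_eq_zero hdet hvm
  exact fun j => congrFun this j

lemma cyclo_dvd (hp : p.Prime) (hprim : IsPrimitiveRoot ω p) (A : ℤ[X])
    (hA : Polynomial.aeval ω A = 0) : cyclotomic p ℤ ∣ A := by
  rw [cyclotomic_eq_minpoly hprim hp.pos]
  exact minpoly.isIntegrallyClosed_dvd (hprim.isIntegral hp.pos) hA

lemma chi_zero (hp : p.Prime) (hprim : IsPrimitiveRoot ω p) (A : ℤ[X])
    (hA : Polynomial.aeval ω A = 0) : ((A.eval 1 : ℤ) : ZMod p) = 0 := by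
  haveI : Fact p.Prime := ⟨hp⟩
  obtain ⟨B, hB⟩ := cyclo_dvd hp hprim A hA
  rw [hB, eval_mul, eval_one_cyclotomic_prime]
  push_cast
  simp [ZMod.natCast_self]

lemma aeval_cyclo (hp : p.Prime) (hprim : IsPrimitiveRoot ω p) :
    Polynomial.aeval ω (cyclotomic p ℤ) = 0 := by
  have h1 : Polynomial.aeval ω (cyclotomic p ℤ) = Polynomial.eval ω (cyclotomic p ℂ) := by
    rw [← map_cyclotomic p (Int.castRingHom ℂ), eval_map, aeval_def]
    rfl
  rw [h1]
  exact hprim.isRoot_cyclotomic hp.pos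

lemma step_lemma (hp : p.Prime) (hprim : IsPrimitiveRoot ω p)
    {k : ℕ} (r c : Fin k → Fin p) (hr : Function.Injective r) (hc : Function.Injective c)
    (a : Fin k → ℤ[X])
    (H : ∀ i, ∑ j, Polynomial.aeval ω (a j) * ω ^ ((r i : ℕ) * (c j : ℕ)) = 0) :
    ∃ b : Fin k → ℤ[X], ∀ j, Polynomial.aeval ω (a j) = (ω - 1) * Polynomial.aeval ω (b j) := by
  classical
  haveI : Fact p.Prime := ⟨hp⟩
  haveI : NeZero p := ⟨hp.pos.ne'⟩
  rcases Nat.eq_zero_or_pos k with hk | hk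
  · subst hk; exact ⟨a, fun j => j.elim0⟩
  set φ : ℤ[X] →+* ℂ := (Polynomial.aeval ω).toRingHom with hφdef
  set P : (ℤ[X])[X] := ∑ j, C (a j) * X ^ (c j : ℕ) with hPdef
  set M : (ℤ[X])[X] := ∏ i, (X - C ((X : ℤ[X]) ^ (r i : ℕ))) with hMdef
  have hM : M.Monic := monic_prod_of_monic _ _ fun i _ => monic_X_sub_C _
  have hMdeg : M.degree = (k : ℕ) := by
    rw [hMdef, degree_prod]
    rw [Finset.sum_congr rfl fun i _ => degree_X_sub_C ((X : ℤ[X]) ^ (r i : ℕ))]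
    simp
  set R : (ℤ[X])[X] := P %ₘ M with hRdef
  have hPMR : P = M * (P /ₘ M) + R := by
    conv_lhs => rw [← modByMonic_add_div P M]
    ring
  -- evaluate over ℂ
  have hmapP : ∀ z : ℂ, (Polynomial.map φ P).eval z = ∑ j, Polynomial.aeval ω (a j) * z ^ (c j : ℕ) := by
    intro z
    rw [hPdef, Polynomial.map_sum, eval_finset_sum]
    refine Finset.sum_congr rfl fun j _ => ?_
    simp [hφdef]
  have hmapM : ∀ i, (Polynomial.map φ M).eval (ω ^ (r i : ℕ)) = 0 := by
    intro i
    rw [hMdef, Polynomial.map_prod, eval_prod]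
    refine Finset.prod_eq_zero (Finset.mem_univ i) ?_
    simp [hφdef]
  have hmapR0 : Polynomial.map φ R = 0 := by
    rcases eq_or_ne (Polynomial.map φ R) 0 with h0 | h0
    · exact h0
    refine eq_zero_of_natDegree_lt_card_of_eval_eq_zero _ (f := fun i => ω ^ (r i : ℕ)) ?_ ?_ ?_
    · intro i i' hii
      exact hr (Fin.val_injective (hprim.pow_inj (r i).isLt (r i').isLt hii))
    · intro i
      have := congrArg (Polynomial.eval (ω ^ (r i : ℕ)) ∘ Polynomial.map φ) hPMR
      simp only [Function.comp_apply, Polynomial.map_add, Polynomial.map_mul, eval_add,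
        eval_mul] at this
      rw [hmapP, hmapM] at this
      have h2 : ∀ j, Polynomial.aeval ω (a j) * (ω ^ (r i : ℕ)) ^ (c j : ℕ)
          = Polynomial.aeval ω (a j) * ω ^ ((r i : ℕ) * (c j : ℕ)) := by
        intro j; rw [← pow_mul]
      rw [Finset.sum_congr rfl (fun j _ => h2 j), H i] at this
      simpa using this.symm
    · rw [Fintype.card_fin]
      rw [natDegree_lt_iff_degree_lt h0]
      calc (Polynomial.map φ R).degree ≤ R.degree := degree_map_le
        _ < M.degree := degree_modByMonic_lt P hM
        _ = (k : ℕ) := hMdeg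
  have hRcoeff : ∀ m, Polynomial.aeval ω (R.coeff m) = 0 := by
    intro m
    have := congrArg (fun q => Polynomial.coeff q m) hmapR0
    simpa [coeff_map, hφdef] using this
  -- map to ZMod p
  set χ : ℤ[X] →+* ZMod p := (Int.castRingHom (ZMod p)).comp (evalRingHom 1) with hχdef
  have hχzero : ∀ A : ℤ[X], Polynomial.aeval ω A = 0 → χ A = 0 := fun A hA =>
    chi_zero hp hprim A hA
  have hΨP : Polynomial.map χ P = ∑ j, C (χ (a j)) * X ^ (c j : ℕ) := by
    rw [hPdef, Polynomial.map_sum]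
    refine Finset.sum_congr rfl fun j _ => by simp
  have hΨM : Polynomial.map χ M = (X - 1) ^ k := by
    rw [hMdef, Polynomial.map_prod]
    have : ∀ i : Fin k, Polynomial.map χ (X - C ((X : ℤ[X]) ^ (r i : ℕ))) = X - 1 := by
      intro i
      simp [hχdef]
    rw [Finset.prod_congr rfl fun i _ => this i, Finset.prod_const, Finset.card_univ,
      Fintype.card_fin]
  have hΨR : Polynomial.map χ R = 0 := by
    ext m
    simp [coeff_map, hχzero _ (hRcoeff m)]
  have hdvd : (∑ j, C (χ (a j)) * X ^ (c j : ℕ)) = (X - 1) ^ k * Polynomial.map χ (P /ₘ M) := by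
    rw [← hΨP, ← hΨM]
    conv_lhs => rw [hPMR]
    rw [Polynomial.map_add, Polynomial.map_mul, hΨR, add_zero]
  have hcinj : Function.Injective fun j => (((c j : ℕ) : ℕ) : ZMod p) := by
    intro j j' hjj
    have := congrArg ZMod.val hjj
    rw [ZMod.val_natCast_of_lt (c j).isLt, ZMod.val_natCast_of_lt (c j').isLt] at this
    exact hc (Fin.ext this)
  have hazero : ∀ j, χ (a j) = 0 := fp_lemma _ hcinj _ _ hdvd
  -- construct b
  have hpdvd : ∀ j, ∃ t : ℤ, (a j).eval 1 = p * t := by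
    intro j
    have := hazero j
    rw [hχdef] at this
    simp only [RingHom.comp_apply, coe_evalRingHom] at this
    obtain ⟨t, ht⟩ := (ZMod.intCast_zmod_eq_zero_iff_dvd _ _).1 this
    exact ⟨t, ht⟩
  choose t ht using hpdvd
  set u : ℤ[X] := cyclotomic p ℤ /ₘ (X - C 1) with hudef
  have hcyclo : cyclotomic p ℤ = C ((p : ℤ)) + (X - C 1) * u := by
    conv_lhs => rw [← modByMonic_add_div (cyclotomic p ℤ) (X - C 1)]
    rw [modByMonic_X_sub_C_eq_C_eval, eval_one_cyclotomic_prime]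
  have hpω : (p : ℂ) = (ω - 1) * Polynomial.aeval ω (-u) := by
    have := congrArg (Polynomial.aeval ω) hcyclo
    rw [aeval_cyclo hp hprim] at this
    simp only [map_add, map_mul, map_sub, map_one, map_natCast, map_intCast, aeval_X, aeval_C,
      algebraMap_int_eq, eq_intCast] at this
    rw [map_neg]
    linear_combination -this
  refine ⟨fun j => (a j /ₘ (X - C 1)) + C (t j) * (-u), fun j => ?_⟩
  have haj : a j = C ((a j).eval 1) + (X - C 1) * (a j /ₘ (X - C 1)) := by
    conv_lhs => rw [← modByMonic_add_div (a j) (X - C 1)]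
    rw [modByMonic_X_sub_C_eq_C_eval]
  calc Polynomial.aeval ω (a j)
      = (((a j).eval 1 : ℤ) : ℂ) + (ω - 1) * Polynomial.aeval ω (a j /ₘ (X - C 1)) := by
        conv_lhs => rw [haj]
        simp only [map_add, map_mul, map_sub, map_one, map_natCast, map_intCast, aeval_X, aeval_C,
          algebraMap_int_eq, eq_intCast]
        try ring
    _ = (ω - 1) * Polynomial.aeval ω ((a j /ₘ (X - C 1)) + C (t j) * (-u)) := by
        rw [ht j]
        simp only [map_add, map_mul, map_neg, map_one, map_natCast, map_intCast, aeval_C,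
          algebraMap_int_eq, eq_intCast]
        push_cast
        rw [hpω, map_neg]
        ring

lemma unit_lemma (hp : p.Prime) (hprim : IsPrimitiveRoot ω p) :
    ∃ v : ℤ[X], (ω - 1) ^ (p - 1) = (p : ℂ) * Polynomial.aeval ω v := by
  classical
  haveI : Fact p.Prime := ⟨hp⟩
  haveI : NeZero p := ⟨hp.pos.ne'⟩
  have h1 : (p : ℂ) = ∏ μ ∈ primitiveRoots p ℂ, (1 - μ) := by
    have := congrArg (Polynomial.eval 1) (cyclotomic_eq_prod_X_sub_primitiveRoots hprim)
    rw [eval_one_cyclotomic_prime, eval_prod] at this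
    simpa using this
  have hcard : (primitiveRoots p ℂ).card = p - 1 := by
    rw [hprim.card_primitiveRoots, Nat.totient_prime hp]
  have hfac : ∀ μ ∈ primitiveRoots p ℂ, ∃ G : ℤ[X],
      (1 - μ) * Polynomial.aeval ω G = 1 - ω := by
    intro μ hμ
    have hμp : IsPrimitiveRoot μ p := (mem_primitiveRoots hp.pos).1 hμ
    obtain ⟨t, htlt, htμ⟩ := hprim.eq_pow_of_pow_eq_one hμp.pow_eq_one
    obtain ⟨s, hslt, hsω⟩ := hμp.eq_pow_of_pow_eq_one hprim.pow_eq_one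
    refine ⟨∑ i ∈ range s, X ^ (t * i), ?_⟩
    have hev : Polynomial.aeval ω (∑ i ∈ range s, (X : ℤ[X]) ^ (t * i))
        = ∑ i ∈ range s, μ ^ i := by
      rw [map_sum]
      refine Finset.sum_congr rfl fun i _ => ?_
      rw [aeval_X_pow, pow_mul, htμ]
    rw [hev]
    have hg := geom_sum_mul μ s
    rw [hsω] at hg
    linear_combination -hg
  choose G hG using hfac
  refine ⟨(-1) ^ (p - 1) * ∏ μ ∈ (primitiveRoots p ℂ).attach, G μ.1 μ.2, ?_⟩
  have h2 : (1 - ω) ^ (p - 1)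
      = (p : ℂ) * Polynomial.aeval ω (∏ μ ∈ (primitiveRoots p ℂ).attach, G μ.1 μ.2) := by
    calc (1 - ω) ^ (p - 1) = ∏ _μ ∈ (primitiveRoots p ℂ).attach, (1 - ω) := by
          rw [prod_const, card_attach, hcard]
      _ = ∏ μ ∈ (primitiveRoots p ℂ).attach, ((1 - μ.1) * Polynomial.aeval ω (G μ.1 μ.2)) :=
          Finset.prod_congr rfl fun μ _ => (hG μ.1 μ.2).symm
      _ = (∏ μ ∈ (primitiveRoots p ℂ).attach, (1 - μ.1))
          * ∏ μ ∈ (primitiveRoots p ℂ).attach, Polynomial.aeval ω (G μ.1 μ.2) :=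
          Finset.prod_mul_distrib
      _ = (p : ℂ) * Polynomial.aeval ω (∏ μ ∈ (primitiveRoots p ℂ).attach, G μ.1 μ.2) := by
          rw [map_prod, h1]
          congr 1
          exact Finset.prod_attach _ _
  have h3 : (ω - 1) ^ (p - 1) = (-1 : ℂ) ^ (p - 1) * (1 - ω) ^ (p - 1) := by
    rw [← mul_pow]; ring_nf
  rw [h3, h2, map_mul, map_pow, map_neg, map_one]
  ring

lemma fin_lemma (hp : p.Prime) (hprim : IsPrimitiveRoot ω p) (A : ℤ[X])
    (h : ∀ n : ℕ, ∃ Cn : ℤ[X], Polynomial.aeval ω A = (p : ℂ) ^ n * Polynomial.aeval ω Cn) :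
    Polynomial.aeval ω A = 0 := by
  haveI : Fact p.Prime := ⟨hp⟩
  set Φ : ℤ[X] := cyclotomic p ℤ with hΦdef
  have hΦm : Φ.Monic := cyclotomic.monic p ℤ
  have hmod : ∀ B : ℤ[X], Polynomial.aeval ω (B %ₘ Φ) = Polynomial.aeval ω B := by
    intro B
    conv_rhs => rw [← modByMonic_add_div B Φ]
    rw [map_add, map_mul, aeval_cyclo hp hprim, zero_mul, add_zero]
  have key : ∀ n : ℕ, ∃ Dn : ℤ[X], A %ₘ Φ = C ((p : ℤ) ^ n) * Dn := by
    intro n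
    obtain ⟨Cn, hCn⟩ := h n
    refine ⟨Cn %ₘ Φ, ?_⟩
    have hf : Polynomial.aeval ω (A %ₘ Φ - C ((p : ℤ) ^ n) * (Cn %ₘ Φ)) = 0 := by
      rw [map_sub, map_mul, hmod, hmod, aeval_C, hCn]
      push_cast
      ring
    have hdvd := cyclo_dvd hp hprim _ hf
    have hdeg : (A %ₘ Φ - C ((p : ℤ) ^ n) * (Cn %ₘ Φ)).degree < Φ.degree := by
      refine lt_of_le_of_lt (degree_sub_le _ _) (max_lt (degree_modByMonic_lt A hΦm) ?_)
      refine lt_of_le_of_lt ?_ (degree_modByMonic_lt Cn hΦm)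
      calc (C ((p : ℤ) ^ n) * (Cn %ₘ Φ)).degree ≤ (C ((p:ℤ)^n)).degree + (Cn %ₘ Φ).degree :=
            degree_mul_le _ _
        _ ≤ 0 + (Cn %ₘ Φ).degree := add_le_add degree_C_le le_rfl
        _ = (Cn %ₘ Φ).degree := zero_add _
    have := eq_zero_of_dvd_of_degree_lt hdvd hdeg
    have h2 : A %ₘ Φ - C ((p : ℤ) ^ n) * (Cn %ₘ Φ) = 0 := this
    linear_combination h2
  have hcoeff : ∀ m : ℕ, (A %ₘ Φ).coeff m = 0 := by
    intro m
    by_contra hm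
    obtain ⟨Dn, hDn⟩ := key ((A %ₘ Φ).coeff m).natAbs
    have hdvd : (p : ℤ) ^ ((A %ₘ Φ).coeff m).natAbs ∣ (A %ₘ Φ).coeff m := by
      refine ⟨Dn.coeff m, ?_⟩
      conv_lhs => rw [hDn]
      rw [coeff_C_mul]
    have hle : (p : ℤ) ^ ((A %ₘ Φ).coeff m).natAbs ≤ |(A %ₘ Φ).coeff m| :=
      Int.le_of_dvd (abs_pos.2 hm) ((dvd_abs _ _).2 hdvd)
    have hlt : ((((A %ₘ Φ).coeff m).natAbs : ℤ)) < (p : ℤ) ^ ((A %ₘ Φ).coeff m).natAbs := by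
      exact_mod_cast Nat.lt_pow_self (n := ((A %ₘ Φ).coeff m).natAbs) hp.one_lt
    rw [Int.abs_eq_natAbs] at hle
    omega
  have hA0 : A %ₘ Φ = 0 := Polynomial.ext fun m => hcoeff m
  rw [← hmod A, hA0, map_zero]

lemma key_lemma (hp : p.Prime) (hprim : IsPrimitiveRoot ω p)
    {k : ℕ} (r c : Fin k → Fin p) (hr : Function.Injective r) (hc : Function.Injective c)
    (a : Fin k → ℤ[X])
    (H : ∀ i, ∑ j, Polynomial.aeval ω (a j) * ω ^ ((r i : ℕ) * (c j : ℕ)) = 0) :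
    ∀ j, Polynomial.aeval ω (a j) = 0 := by
  have hω1 : ω - 1 ≠ 0 := sub_ne_zero_of_ne (hprim.ne_one hp.one_lt)
  have iter : ∀ n : ℕ, ∃ b : Fin k → ℤ[X],
      (∀ i, ∑ j, Polynomial.aeval ω (b j) * ω ^ ((r i : ℕ) * (c j : ℕ)) = 0) ∧
      ∀ j, Polynomial.aeval ω (a j) = (ω - 1) ^ n * Polynomial.aeval ω (b j) := by
    intro n
    induction n with
    | zero => exact ⟨a, H, fun j => by simp⟩
    | succ n ih =>
      obtain ⟨b, hbH, hba⟩ := ih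
      obtain ⟨b', hb'⟩ := step_lemma hp hprim r c hr hc b hbH
      refine ⟨b', fun i => ?_, fun j => ?_⟩
      · have hmul : (ω - 1) * ∑ j, Polynomial.aeval ω (b' j) * ω ^ ((r i : ℕ) * (c j : ℕ))
            = ∑ j, Polynomial.aeval ω (b j) * ω ^ ((r i : ℕ) * (c j : ℕ)) := by
          rw [Finset.mul_sum]
          exact Finset.sum_congr rfl fun j _ => by rw [hb' j]; ring
        have := hbH i
        rw [← hmul] at this
        exact (mul_eq_zero.1 this).resolve_left hω1
      · rw [hba j, hb' j, pow_succ]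
        ring
  intro j
  obtain ⟨v, hv⟩ := unit_lemma hp hprim
  refine fin_lemma hp hprim (a j) fun n => ?_
  obtain ⟨b, _, hb⟩ := iter (n * (p - 1))
  refine ⟨v ^ n * b j, ?_⟩
  rw [hb j, pow_mul', hv, mul_pow, map_mul, map_pow]
  ring

lemma aux_main (hp : p.Prime) (hprim : IsPrimitiveRoot ω p) :
    ∀ k : ℕ, ∀ r c : Fin k → Fin p, Function.Injective r → Function.Injective c →
      Matrix.det (fun i j : Fin k => ω ^ ((r i : ℕ) * (c j : ℕ))) ≠ 0 := by
  intro k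
  induction k using Nat.strong_induction_on with
  | _ k IH =>
    intro r c hr hc
    match k, r, c, hr, hc, IH with
    | 0, r, c, hr, hc, IH => exact fun h => one_ne_zero ((Matrix.det_fin_zero (A := Matrix.of fun i j : Fin 0 => ω ^ ((r i : ℕ) * (c j : ℕ)))).symm.trans h)
    | (m+1), r, c, hr, hc, IH =>
      intro h0
      set Mx : Matrix (Fin (m+1)) (Fin (m+1)) ℂ :=
        fun i j => ω ^ ((r i : ℕ) * (c j : ℕ)) with hMx
      set Np : Fin (m+1) → Matrix (Fin m) (Fin m) ℤ[X] := fun j => fun l l' =>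
        X ^ ((r ((0 : Fin (m+1)).succAbove l) : ℕ) * (c (j.succAbove l') : ℕ)) with hNp
      set a : Fin (m+1) → ℤ[X] := fun j => (-1) ^ ((0 : ℕ) + (j : ℕ)) * (Np j).det with ha
      set φ : ℤ[X] →+* ℂ := (Polynomial.aeval ω : ℤ[X] →ₐ[ℤ] ℂ).toRingHom with hφ
      have hsub : ∀ j : Fin (m+1),
          ((Np j).map φ)
          = fun l l' => ω ^ ((r ((0 : Fin (m+1)).succAbove l) : ℕ) * (c (j.succAbove l') : ℕ)) := by
        intro j
        funext l l'
        simp [hNp, hφ, Matrix.map]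
      have haev : ∀ j, Polynomial.aeval ω (a j)
          = (-1 : ℂ) ^ ((0 : ℕ) + (j : ℕ))
            * Matrix.det (fun l l' : Fin m =>
                ω ^ ((r ((0 : Fin (m+1)).succAbove l) : ℕ) * (c (j.succAbove l') : ℕ))) := by
        intro j
        rw [ha]
        simp only [map_mul, map_pow, map_neg, map_one]
        congr 1
        rw [← hsub j]
        exact RingHom.map_det _ _
      have H : ∀ i, ∑ j, Polynomial.aeval ω (a j) * ω ^ ((r i : ℕ) * (c j : ℕ)) = 0 := by
        intro i
        have hAdet : (Mx.updateRow 0 (Mx i)).det = 0 := by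
          rcases eq_or_ne i 0 with h | h
          · rw [h, Matrix.updateRow_eq_self]
            exact h0
          · refine Matrix.det_zero_of_row_eq (Ne.symm h) ?_
            rw [Matrix.updateRow_self, Matrix.updateRow_ne h]
        have hexp := Matrix.det_succ_row (Mx.updateRow 0 (Mx i)) 0
        rw [hAdet] at hexp
        have hsub2 : ∀ j : Fin (m+1),
            (Mx.updateRow 0 (Mx i)).submatrix (0 : Fin (m+1)).succAbove j.succAbove
            = fun l l' : Fin m =>
                ω ^ ((r ((0 : Fin (m+1)).succAbove l) : ℕ) * (c (j.succAbove l') : ℕ)) := by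
          intro j
          funext l l'
          rw [Matrix.submatrix_apply, Matrix.updateRow_ne (Fin.succAbove_ne 0 l)]
        rw [Finset.sum_congr rfl (fun j _ => by
          rw [hsub2 j, Matrix.updateRow_self] : ∀ j ∈ Finset.univ, _ = _)] at hexp
        rw [Finset.sum_congr rfl fun j _ => by rw [haev j]]
        have heq : ∑ j : Fin (m+1), ((-1 : ℂ) ^ ((0:ℕ) + (j : ℕ))
              * Matrix.det (fun l l' : Fin m =>
                  ω ^ ((r ((0 : Fin (m+1)).succAbove l) : ℕ) * (c (j.succAbove l') : ℕ))))
              * ω ^ ((r i : ℕ) * (c j : ℕ))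
            = ∑ j : Fin (m+1), (-1 : ℂ) ^ (((0 : Fin (m+1)) : ℕ) + (j : ℕ)) * Mx i j
              * Matrix.det (fun l l' : Fin m =>
                  ω ^ ((r ((0 : Fin (m+1)).succAbove l) : ℕ) * (c (j.succAbove l') : ℕ))) := by
          refine Finset.sum_congr rfl fun j _ => ?_
          simp only [hMx, Fin.val_zero]
          ring
        rw [heq]
        exact hexp.symm
      have hzero := key_lemma hp hprim r c hr hc a H
      have h00 := haev 0
      rw [hzero 0] at h00
      have hdet0 : Matrix.det (fun l l' : Fin m =>
          ω ^ ((r ((0 : Fin (m+1)).succAbove l) : ℕ) * (c ((0:Fin (m+1)).succAbove l') : ℕ))) = 0 := by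
        have := h00.symm
        simpa using this
      exact IH m (Nat.lt_succ_self m)
        (fun l => r ((0 : Fin (m+1)).succAbove l))
        (fun l' => c ((0 : Fin (m+1)).succAbove l'))
        (hr.comp (Fin.succAbove_right_injective))
        (hc.comp (Fin.succAbove_right_injective)) hdet0

end ChebotarevAux

theorem chebotarev_minors_nonzero
    (p : ℕ) (hp : p.Prime)
    (ω : ℂ) (hω : ω = Complex.exp (2 * Real.pi * Complex.I / p))
    (k : ℕ) (r c : Fin k → Fin p)
    (hr : Function.Injective r) (hc : Function.Injective c) :
    Matrix.det (fun i j : Fin k => ω ^ ((r i : ℕ) * (c j : ℕ))) ≠ 0 := by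
  have hprim : IsPrimitiveRoot ω p := by
    rw [hω]; exact Complex.isPrimitiveRoot_exp p hp.ne_zero
  exact aux_main hp hprim k r c hr hc
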